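/- A quasisymmetric homeomorphism H of ℝ is symmetric (i.e., there is a vanishing function ε with 1/(1+ε(y)) ≤ ρ_H(x,y) ≤ 1+ε(y) for all x and y>0) if and only if there is a vanishing function ε' such that max{|ρ_H(x,y,k) − k|, |ρ_H(x,−y,k) − k|} ≤ ε'(y) for all real x, all y > 0, and all 0 < k ≤ 1. -/

import Mathlib

open Set Filter

/-- A bounded positive function defined for y > 0 which tends to 0 as y → 0⁺. -/
def Vanishing (ε : ℝ → ℝ) : Prop :=
  (∀ y : ℝ, 0 < y → 0 < ε y) ∧ (∃ C : ℝ, ∀ y : ℝ, 0 < y → ε y ≤ C) ∧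
    Tendsto ε (nhdsWithin 0 (Ioi 0)) (nhds 0)

/-- A quasisymmetric homeomorphism H of ℝ is symmetric iff there is a
vanishing function ε' with max{|ρ_H(x,y,k) − k|, |ρ_H(x,−y,k) − k|} ≤ ε'(y)
for all x, y > 0, 0 < k ≤ 1. -/

noncomputable def Efun (δ : ℝ) : ℕ → ℝ
  | 0 => 0
  | n+1 => Efun δ n + (δ/4) * ((1/2:ℝ)^n + 2 * Efun δ n)

lemma Efun_nonneg {δ : ℝ} (hδ : 0 ≤ δ) : ∀ n, 0 ≤ Efun δ n := by
  intro n
  induction n with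
  | zero => simp [Efun]
  | succ n ih => simp only [Efun]; positivity

lemma Efun_le {δ : ℝ} (hδ : 0 ≤ δ) : ∀ n : ℕ, Efun δ n ≤ (δ/4) * n * (1+δ)^n := by
  intro n
  induction n with
  | zero => simp [Efun]
  | succ n ih =>
    have h1 : (1:ℝ) ≤ (1+δ)^(n+1) := one_le_pow₀ (by linarith)
    have h2 : ((1:ℝ)/2)^n ≤ 1 := pow_le_one₀ (by norm_num) (by norm_num)
    have h3 : (1+δ)^n ≤ (1+δ)^(n+1) := by
      apply pow_le_pow_right₀ (by linarith) (by omega)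
    have h4 : (0:ℝ) ≤ (1+δ)^n := by positivity
    have h5 : 0 ≤ Efun δ n := Efun_nonneg hδ n
    simp only [Efun]
    have key : Efun δ n + (δ/4) * ((1/2:ℝ)^n + 2 * Efun δ n)
        = Efun δ n * (1+δ/2) + (δ/4)*(1/2:ℝ)^n := by ring
    have e1 : Efun δ n * (1+δ/2) ≤ ((δ/4)*n*(1+δ)^n) * (1+δ) := by
      apply mul_le_mul ih (by linarith) (by linarith) (by positivity)
    have e2 : (δ/4)*(1/2:ℝ)^n ≤ (δ/4)*(1+δ)^(n+1) := by
      apply mul_le_mul_of_nonneg_left (h2.trans h1) (by positivity)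
    have e3 : ((δ/4)*n*(1+δ)^n) * (1+δ) + (δ/4)*(1+δ)^(n+1)
        = (δ/4)*((n:ℝ)+1)*(1+δ)^(n+1) := by rw [pow_succ]; ring
    push_cast
    linarith

noncomputable def Phi (δ : ℝ) : ℝ :=
  sInf (Set.range fun n : ℕ => (δ/4)*n*(1+δ)^n + (1/2:ℝ)^n)

lemma Phi_bddBelow {δ : ℝ} (hδ : 0 ≤ δ) :
    BddBelow (Set.range fun n : ℕ => (δ/4)*n*(1+δ)^n + (1/2:ℝ)^n) := by
  use 0
  rintro b ⟨n, rfl⟩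
  positivity

lemma Phi_nonneg {δ : ℝ} (hδ : 0 ≤ δ) : 0 ≤ Phi δ := by
  apply le_csInf (Set.range_nonempty _)
  rintro b ⟨n, rfl⟩
  positivity

lemma Phi_le {δ : ℝ} (hδ : 0 ≤ δ) (n : ℕ) : Phi δ ≤ (δ/4)*n*(1+δ)^n + (1/2:ℝ)^n :=
  csInf_le (Phi_bddBelow hδ) ⟨n, rfl⟩

lemma Phi_le_one {δ : ℝ} (hδ : 0 ≤ δ) : Phi δ ≤ 1 := by
  have := Phi_le hδ 0
  norm_num at this
  exact this

lemma Phi_small : ∀ t : ℝ, 0 < t → ∃ δ₀ > 0, ∀ δ : ℝ, 0 ≤ δ → δ < δ₀ → Phi δ < t := by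
  intro t ht
  obtain ⟨n, hn⟩ := exists_pow_lt_of_lt_one (by linarith : (0:ℝ) < t/2) (by norm_num : (1:ℝ)/2 < 1)
  refine ⟨min 1 (2*t/((n:ℝ)*2^n+1)), lt_min one_pos (by positivity), ?_⟩
  intro δ hδ hδlt
  have hδ1 : δ ≤ 1 := le_of_lt (lt_of_lt_of_le hδlt (min_le_left _ _))
  have hδ2 : δ < 2*t/((n:ℝ)*2^n+1) := lt_of_lt_of_le hδlt (min_le_right _ _)
  have hpow : (1+δ)^n ≤ 2^n := pow_le_pow_left₀ (by linarith) (by linarith) n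
  have hden : (0:ℝ) < (n:ℝ)*2^n+1 := by positivity
  have hkey : δ * ((n:ℝ)*2^n+1) < 2*t := by
    rw [div_eq_mul_inv] at hδ2
    calc δ * ((n:ℝ)*2^n+1) < (2*t*((n:ℝ)*2^n+1)⁻¹) * ((n:ℝ)*2^n+1) := by
          apply mul_lt_mul_of_pos_right hδ2 hden
      _ = 2*t := by field_simp
  have h1 : (δ/4)*n*(1+δ)^n < t/2 := by
    have : (δ/4)*n*(1+δ)^n ≤ (δ/4)*((n:ℝ)*2^n) := by
      have : (δ/4)*n*(1+δ)^n ≤ (δ/4)*n*2^n := by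
        apply mul_le_mul_of_nonneg_left hpow
        positivity
      linarith [this]
    nlinarith
  calc Phi δ ≤ (δ/4)*n*(1+δ)^n + (1/2:ℝ)^n := Phi_le hδ n
    _ < t/2 + t/2 := by linarith
    _ = t := by ring

lemma midcombine (fa fb fm f0 a b s E δ c : ℝ) (hδ : 0 ≤ δ)
    (h1 : fb - fm ≤ (1+δ)*(fm - fa)) (h2 : fm - fa ≤ (1+δ)*(fb - fm))
    (iha : |fa - f0 - a*s| ≤ E*s) (ihb : |fb - f0 - b*s| ≤ E*s)
    (hbs : b*s - a*s = c*s) :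
    |fm - f0 - ((a+b)/2)*s| ≤ (E + (δ/4)*(c + 2*E))*s := by
  rw [abs_le] at iha ihb ⊢
  have hpq : |(fm - fa) - (fb - fm)| ≤ δ * ((fm - fa) + (fb - fm)) / 2 := by
    rw [abs_le]
    constructor
    · rcases le_total (fb - fm) (fm - fa) with h | h
      · nlinarith
      · nlinarith
    · rcases le_total (fb - fm) (fm - fa) with h | h
      · nlinarith
      · nlinarith
  rw [abs_le] at hpq
  have hfb : (fm - fa) + (fb - fm) ≤ (c + 2*E)*s := by linarith [iha.1, iha.2, ihb.1, ihb.2]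
  have hd4 : δ*((fm - fa) + (fb - fm)) ≤ δ*((c + 2*E)*s) :=
    mul_le_mul_of_nonneg_left hfb hδ
  constructor
  · linarith [iha.1, ihb.1, hpq.1]
  · linarith [iha.2, ihb.2, hpq.2]

lemma dyadic (f : ℝ → ℝ) (hf : StrictMono f) (δ : ℝ) (hδ : 0 ≤ δ)
    (hsym : ∀ a b : ℝ, 0 ≤ a → b ≤ 1 → a < b →
      f b - f ((a+b)/2) ≤ (1+δ) * (f ((a+b)/2) - f a) ∧
      f ((a+b)/2) - f a ≤ (1+δ) * (f b - f ((a+b)/2))) :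
    ∀ n : ℕ, ∀ j : ℕ, j ≤ 2^n →
      |f ((j:ℝ)/2^n) - f 0 - ((j:ℝ)/2^n) * (f 1 - f 0)| ≤ Efun δ n * (f 1 - f 0) := by
  intro n
  induction n with
  | zero =>
    intro j hj
    interval_cases j <;> simp [Efun]
  | succ n ih =>
    intro j hj
    rcases Nat.even_or_odd j with ⟨i, hi⟩ | ⟨i, hi⟩
    · -- even case : j = 2i
      subst hi
      have hi2 : i ≤ 2^n := by omega
      have hcast : ((i+i : ℕ):ℝ)/2^(n+1) = (i:ℝ)/2^n := by
        push_cast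
        rw [pow_succ]
        field_simp
        ring
      rw [hcast]
      have hE : Efun δ n ≤ Efun δ (n+1) := by
        have h0 : (0:ℝ) ≤ (δ/4) * ((1/2:ℝ)^n + 2 * Efun δ n) := by
          have := Efun_nonneg hδ n
          positivity
        simp only [Efun]
        linarith
      have hs : 0 ≤ f 1 - f 0 := by
        have := hf (by norm_num : (0:ℝ) < 1)
        linarith
      calc |f ((i:ℝ)/2^n) - f 0 - ((i:ℝ)/2^n) * (f 1 - f 0)| ≤ Efun δ n * (f 1 - f 0) :=
            ih i hi2
        _ ≤ Efun δ (n+1) * (f 1 - f 0) := mul_le_mul_of_nonneg_right hE hs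
    · -- odd case : j = 2i+1
      subst hi
      have hi2 : i + 1 ≤ 2^n := by
        have : 2*i + 1 ≤ 2*2^n := by rw [← pow_succ']; omega
        omega
      have hpow : (0:ℝ) < 2^n := by positivity
      have ha0 : (0:ℝ) ≤ (i:ℝ)/2^n := by positivity
      have hb1 : ((i:ℝ)+1)/2^n ≤ 1 := by
        rw [div_le_one hpow]
        have : ((i:ℝ)+1) ≤ ((2^n : ℕ) : ℝ) := by exact_mod_cast hi2
        simpa using this
      have hab : (i:ℝ)/2^n < ((i:ℝ)+1)/2^n := by
        rw [div_lt_div_iff₀ hpow hpow]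
        nlinarith
      have hm : ((2*i+1 : ℕ):ℝ)/2^(n+1) = ((i:ℝ)/2^n + ((i:ℝ)+1)/2^n)/2 := by
        push_cast
        rw [pow_succ]
        field_simp
        ring
      rw [hm]
      obtain ⟨h1, h2⟩ := hsym ((i:ℝ)/2^n) (((i:ℝ)+1)/2^n) ha0 hb1 hab
      have iha := ih i (by omega)
      have ihb := ih (i+1) hi2
      have hcast2 : (((i:ℕ)+1 : ℕ):ℝ) = (i:ℝ)+1 := by push_cast; ring
      rw [hcast2] at ihb
      have hbs : (((i:ℝ)+1)/2^n)*(f 1 - f 0) - ((i:ℝ)/2^n)*(f 1 - f 0)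
          = (1/2:ℝ)^n*(f 1 - f 0) := by
        field_simp
        have h2 : ((1:ℝ)/2)^n * 2^n = 1 := by rw [← mul_pow]; norm_num
        linear_combination (-(f 1 - f 0)) * h2
      have := midcombine (f ((i:ℝ)/2^n)) (f (((i:ℝ)+1)/2^n))
        (f (((i:ℝ)/2^n + ((i:ℝ)+1)/2^n)/2)) (f 0) ((i:ℝ)/2^n) (((i:ℝ)+1)/2^n)
        (f 1 - f 0) (Efun δ n) δ ((1/2:ℝ)^n) hδ h1 h2 iha ihb hbs
      simpa only [Efun] using this

lemma core (f : ℝ → ℝ) (hf : StrictMono f) (δ : ℝ) (hδ : 0 ≤ δ)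
    (hsym : ∀ a b : ℝ, 0 ≤ a → b ≤ 1 → a < b →
      f b - f ((a+b)/2) ≤ (1+δ) * (f ((a+b)/2) - f a) ∧
      f ((a+b)/2) - f a ≤ (1+δ) * (f b - f ((a+b)/2))) :
    ∀ k : ℝ, 0 ≤ k → k ≤ 1 →
      |f k - f 0 - k * (f 1 - f 0)| ≤ Phi δ * (f 1 - f 0) := by
  intro k hk0 hk1
  have hs : 0 < f 1 - f 0 := sub_pos.2 (hf one_pos)
  -- per n bound
  have main : ∀ n : ℕ, |f k - f 0 - k * (f 1 - f 0)| ≤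
      ((δ/4)*n*(1+δ)^n + (1/2:ℝ)^n) * (f 1 - f 0) := by
    intro n
    have hpow : (0:ℝ) < 2^n := by positivity
    set j : ℕ := min (⌊k * (2:ℝ)^n⌋₊) (2^n - 1) with hj_def
    have hmin : j ≤ ⌊k * (2:ℝ)^n⌋₊ := hj_def ▸ min_le_left _ _
    have hj1 : (j:ℝ) ≤ k * 2^n := by
      calc (j:ℝ) ≤ (⌊k * (2:ℝ)^n⌋₊ : ℝ) := Nat.cast_le.2 hmin
        _ ≤ k * 2^n := Nat.floor_le (by positivity)
    have hjn : j + 1 ≤ 2^n := by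
      have h2n : 1 ≤ 2^n := Nat.one_le_two_pow
      omega
    have hj2 : k * 2^n ≤ (j:ℝ) + 1 := by
      rcases le_or_gt (⌊k * (2:ℝ)^n⌋₊) (2^n - 1) with h | h
      · have hj_eq : j = ⌊k * 2^n⌋₊ := by rw [hj_def]; exact min_eq_left h
        rw [hj_eq]
        exact le_of_lt (Nat.lt_floor_add_one _)
      · have hj_eq : j = 2^n - 1 := by rw [hj_def]; exact min_eq_right (le_of_lt h)
        have h2n : 1 ≤ 2^n := Nat.one_le_two_pow
        have : ((j:ℕ) + 1 : ℕ) = 2^n := by omega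
        have hcast : ((j:ℝ) + 1) = ((2^n : ℕ) : ℝ) := by exact_mod_cast congrArg (Nat.cast (R := ℝ)) this
        rw [hcast]
        push_cast
        nlinarith
    have hka : (j:ℝ)/2^n ≤ k := by rw [div_le_iff₀ hpow]; exact hj1
    have hkb : k ≤ ((j:ℝ)+1)/2^n := by rw [le_div_iff₀ hpow]; exact hj2
    have d1 := dyadic f hf δ hδ hsym n j (by omega)
    have d2 := dyadic f hf δ hδ hsym n (j+1) hjn
    have hcast2 : ((j+1 : ℕ):ℝ) = (j:ℝ)+1 := by push_cast; ring
    rw [hcast2] at d2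
    rw [abs_le] at d1 d2 ⊢
    have hfa : f ((j:ℝ)/2^n) ≤ f k := hf.monotone hka
    have hfb : f k ≤ f (((j:ℝ)+1)/2^n) := hf.monotone hkb
    have hEle := Efun_le hδ n
    have hgap : ((j:ℝ)+1)/2^n - (j:ℝ)/2^n = (1/2:ℝ)^n := by
      field_simp
      rw [← mul_pow]; norm_num
    constructor
    · -- lower bound
      have step1 : f ((j:ℝ)/2^n) - f 0 - ((j:ℝ)/2^n)*(f 1 - f 0) ≥ -(Efun δ n * (f 1 - f 0)) := d1.1
      have hterm : (k - (j:ℝ)/2^n) * (f 1 - f 0) ≤ (1/2:ℝ)^n * (f 1 - f 0) := by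
        apply mul_le_mul_of_nonneg_right _ hs.le
        linarith [hgap, hkb]
      have hE : Efun δ n * (f 1 - f 0) ≤ ((δ/4)*n*(1+δ)^n) * (f 1 - f 0) :=
        mul_le_mul_of_nonneg_right hEle hs.le
      nlinarith [mul_le_mul_of_nonneg_right hka hs.le]
    · -- upper bound
      have step1 : f (((j:ℝ)+1)/2^n) - f 0 - (((j:ℝ)+1)/2^n)*(f 1 - f 0) ≤ Efun δ n * (f 1 - f 0) := d2.2
      have hterm : (((j:ℝ)+1)/2^n - k) * (f 1 - f 0) ≤ (1/2:ℝ)^n * (f 1 - f 0) := by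
        apply mul_le_mul_of_nonneg_right _ hs.le
        linarith [hgap, hka]
      have hE : Efun δ n * (f 1 - f 0) ≤ ((δ/4)*n*(1+δ)^n) * (f 1 - f 0) :=
        mul_le_mul_of_nonneg_right hEle hs.le
      nlinarith [mul_le_mul_of_nonneg_right hkb hs.le]
  -- pass to infimum
  have hdiv : |f k - f 0 - k * (f 1 - f 0)| / (f 1 - f 0) ≤ Phi δ := by
    apply le_csInf (Set.range_nonempty _)
    rintro b ⟨n, rfl⟩
    rw [div_le_iff₀ hs]
    exact main n
  calc |f k - f 0 - k * (f 1 - f 0)|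
      = (|f k - f 0 - k * (f 1 - f 0)| / (f 1 - f 0)) * (f 1 - f 0) := by field_simp
    _ ≤ Phi δ * (f 1 - f 0) := mul_le_mul_of_nonneg_right hdiv hs.le

theorem stmt6 (H : ℝ → ℝ) (Hmono : StrictMono H) (Hcont : Continuous H)
    (Hsurj : Function.Surjective H)
    (M : ℝ) (hM : 1 ≤ M)
    (hqs : ∀ x y : ℝ, 0 < y →
      1 / M ≤ (H (x + y) - H x) / (H x - H (x - y)) ∧
      (H (x + y) - H x) / (H x - H (x - y)) ≤ M) :
    (∃ ε : ℝ → ℝ, Vanishing ε ∧ ∀ x y : ℝ, 0 < y →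
        1 / (1 + ε y) ≤ (H (x + y) - H x) / (H x - H (x - y)) ∧
        (H (x + y) - H x) / (H x - H (x - y)) ≤ 1 + ε y) ↔
    (∃ ε' : ℝ → ℝ, Vanishing ε' ∧ ∀ x y : ℝ, 0 < y → ∀ k : ℝ, 0 < k → k ≤ 1 →
        max |(H (x + k * y) - H x) / (H x - H (x - y)) - k|
            |(H (x + k * (-y)) - H x) / (H x - H (x - (-y))) - k| ≤ ε' y) := by
  constructor
  · -- forward
    rintro ⟨ε, ⟨hpos, ⟨C, hC⟩, htend⟩, hε⟩
    set η : ℝ → ℝ := fun y => sSup (ε '' Ioc 0 y) with hη_def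
    have hne : ∀ y : ℝ, 0 < y → (ε '' Ioc 0 y).Nonempty :=
      fun y hy => ⟨ε y, ⟨y, ⟨hy, le_refl y⟩, rfl⟩⟩
    have hbdd : ∀ y : ℝ, BddAbove (ε '' Ioc 0 y) := by
      intro y
      refine ⟨C, ?_⟩
      rintro _ ⟨z, hz, rfl⟩
      exact hC z hz.1
    have hηge : ∀ y : ℝ, 0 < y → ε y ≤ η y :=
      fun y hy => le_csSup (hbdd y) ⟨y, ⟨hy, le_refl y⟩, rfl⟩
    have hηpos : ∀ y : ℝ, 0 < y → 0 < η y := fun y hy => lt_of_lt_of_le (hpos y hy) (hηge y hy)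
    have hηmono : ∀ y₁ y₂ : ℝ, 0 < y₁ → y₁ ≤ y₂ → η y₁ ≤ η y₂ := by
      intro y₁ y₂ h1 h12
      exact csSup_le_csSup (hbdd y₂) (hne y₁ h1) (image_mono (Ioc_subset_Ioc_right h12))
    have hηC : ∀ y : ℝ, 0 < y → η y ≤ C := by
      intro y hy
      apply csSup_le (hne y hy)
      rintro _ ⟨z, hz, rfl⟩
      exact hC z hz.1
    have hC0 : 0 ≤ C := le_trans (hpos 1 one_pos).le (hC 1 one_pos)
    have hηsmall : ∀ t : ℝ, 0 < t → ∃ y₀ > 0, ∀ y : ℝ, 0 < y → y < y₀ → η y < t := by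
      intro t ht
      rw [Metric.tendsto_nhdsWithin_nhds] at htend
      obtain ⟨y₀, hy₀, hball⟩ := htend (t/2) (by linarith)
      refine ⟨y₀, hy₀, ?_⟩
      intro y hy hyy₀
      have : η y ≤ t/2 := by
        apply csSup_le (hne y hy)
        rintro _ ⟨z, hz, rfl⟩
        have hz0 : 0 < z := hz.1
        have hzy : z < y₀ := lt_of_le_of_lt hz.2 hyy₀
        have := hball (mem_Ioi.2 hz0) (by rw [Real.dist_eq, sub_zero, abs_of_pos hz0]; exact hzy)
        rw [Real.dist_eq, sub_zero] at this
        exact le_of_lt (lt_of_abs_lt this)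
      linarith
    refine ⟨fun y => (Phi (η y) + η y) * (1 + η y)^2, ⟨?_, ?_, ?_⟩, ?_⟩
    · -- positivity
      intro y hy
      have h1 := hηpos y hy
      have h2 := Phi_nonneg (h1.le)
      positivity
    · -- boundedness
      refine ⟨(1 + C) * (1 + C)^2, ?_⟩
      intro y hy
      have h1 := hηpos y hy
      have h2 := Phi_nonneg h1.le
      have h3 := Phi_le_one h1.le
      have h4 := hηC y hy
      have h5 : Phi (η y) + η y ≤ 1 + C := by linarith
      have h6 : (1 + η y)^2 ≤ (1 + C)^2 := by nlinarith
      show (Phi (η y) + η y) * (1 + η y)^2 ≤ (1 + C) * (1 + C)^2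
      exact mul_le_mul h5 h6 (by positivity) (by linarith)
    · -- tendsto
      rw [Metric.tendsto_nhdsWithin_nhds]
      intro t ht
      obtain ⟨δ₀, hδ₀, hΦ⟩ := Phi_small (t/8) (by linarith)
      obtain ⟨y₀, hy₀, hsm⟩ := hηsmall (min δ₀ (min 1 (t/8)))
        (lt_min hδ₀ (lt_min one_pos (by linarith)))
      refine ⟨y₀, hy₀, ?_⟩
      intro y hy hdist
      rw [Real.dist_eq, sub_zero] at hdist ⊢
      have hy' : 0 < y := mem_Ioi.1 hy
      have hsmy := hsm y hy' (lt_of_abs_lt (by rwa [abs_of_pos hy'] at hdist ⊢))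
      have hη1 : η y < δ₀ := lt_of_lt_of_le hsmy (min_le_left _ _)
      have hη2 : η y < 1 := lt_of_lt_of_le hsmy (le_trans (min_le_right _ _) (min_le_left _ _))
      have hη3 : η y < t/8 := lt_of_lt_of_le hsmy (le_trans (min_le_right _ _) (min_le_right _ _))
      have hp := hΦ (η y) (hηpos y hy').le hη1
      have hpn := Phi_nonneg (hηpos y hy').le
      have hηp := hηpos y hy'
      rw [abs_of_nonneg (by positivity)]
      have ha : Phi (η y) + η y < t/4 := by linarith
      have hbb : (1 + η y)^2 ≤ 4 := by nlinarith
      calc (Phi (η y) + η y) * (1 + η y)^2 ≤ (Phi (η y) + η y) * 4 :=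
            mul_le_mul_of_nonneg_left hbb (by linarith)
        _ < t := by linarith
    · -- the main estimate
      intro x y hy k hk hk1
      have hηy := hηpos y hy
      have hηy0 : (0:ℝ) ≤ η y := hηy.le
      have hd : 0 < H x - H (x - y) := sub_pos.2 (Hmono (by linarith))
      have hs : 0 < H (x + y) - H x := sub_pos.2 (Hmono (by linarith))
      obtain ⟨hl, hu⟩ := hε x y hy
      have he0 : 0 < ε y := hpos y hy
      have h1e : (0:ℝ) < 1 + ε y := by linarith
      have hey : ε y ≤ η y := hηge y hy
      have hsd : H (x + y) - H x ≤ (1 + η y) * (H x - H (x - y)) := by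
        rw [div_le_iff₀ hd] at hu
        linarith [mul_le_mul_of_nonneg_left hey hd.le, hu]
      have hds : H x - H (x - y) ≤ (1 + η y) * (H (x + y) - H x) := by
        rw [div_le_div_iff₀ h1e hd] at hl
        linarith [mul_le_mul_of_nonneg_left hey hs.le, hl]
      have hfmono : StrictMono (fun t : ℝ => H (x + t*y)) := by
        intro a b hab
        exact Hmono (by have := mul_lt_mul_of_pos_right hab hy; linarith)
      have hgmono : StrictMono (fun t : ℝ => -H (x - t*y)) := by
        intro a b hab
        show -H (x - a*y) < -H (x - b*y)
        rw [neg_lt_neg_iff]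
        exact Hmono (by have := mul_lt_mul_of_pos_right hab hy; linarith)
      have hsymf : ∀ a b : ℝ, 0 ≤ a → b ≤ 1 → a < b →
          H (x + b*y) - H (x + ((a+b)/2)*y) ≤ (1 + η y) * (H (x + ((a+b)/2)*y) - H (x + a*y)) ∧
          H (x + ((a+b)/2)*y) - H (x + a*y) ≤ (1 + η y) * (H (x + b*y) - H (x + ((a+b)/2)*y)) := by
        intro a b ha hb hab
        have hba : (0:ℝ) < b - a := by linarith
        have hty : 0 < (b-a)/2*y := by positivity
        obtain ⟨l1, l2⟩ := hε (x + ((a+b)/2)*y) ((b-a)/2*y) hty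
        have e1 : x + ((a+b)/2)*y + (b-a)/2*y = x + b*y := by ring
        have e2 : x + ((a+b)/2)*y - (b-a)/2*y = x + a*y := by ring
        rw [e1, e2] at l1 l2
        have hden : 0 < H (x + ((a+b)/2)*y) - H (x + a*y) := sub_pos.2 (Hmono (by
          have := mul_lt_mul_of_pos_right (show a < (a+b)/2 by linarith) hy; linarith))
        have hnum : 0 < H (x + b*y) - H (x + ((a+b)/2)*y) := sub_pos.2 (Hmono (by
          have := mul_lt_mul_of_pos_right (show (a+b)/2 < b by linarith) hy; linarith))
        have hety : ε ((b-a)/2*y) ≤ η y :=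
          le_trans (hηge _ hty) (hηmono _ _ hty (by
            have := mul_le_mul_of_nonneg_right (show (b-a)/2 ≤ 1 by linarith) hy.le
            linarith))
        have he0' : 0 < ε ((b-a)/2*y) := hpos _ hty
        constructor
        · rw [div_le_iff₀ hden] at l2
          linarith [mul_le_mul_of_nonneg_left hety hden.le, l2]
        · rw [div_le_div_iff₀ (by linarith) hden] at l1
          linarith [mul_le_mul_of_nonneg_left hety hnum.le, l1]
      have hsymg : ∀ a b : ℝ, 0 ≤ a → b ≤ 1 → a < b →
          (-H (x - b*y)) - (-H (x - ((a+b)/2)*y)) ≤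
            (1 + η y) * ((-H (x - ((a+b)/2)*y)) - (-H (x - a*y))) ∧
          (-H (x - ((a+b)/2)*y)) - (-H (x - a*y)) ≤
            (1 + η y) * ((-H (x - b*y)) - (-H (x - ((a+b)/2)*y))) := by
        intro a b ha hb hab
        have hba : (0:ℝ) < b - a := by linarith
        have hty : 0 < (b-a)/2*y := by positivity
        obtain ⟨l1, l2⟩ := hε (x - ((a+b)/2)*y) ((b-a)/2*y) hty
        have e1 : x - ((a+b)/2)*y + (b-a)/2*y = x - a*y := by ring
        have e2 : x - ((a+b)/2)*y - (b-a)/2*y = x - b*y := by ring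
        rw [e1, e2] at l1 l2
        have hden : 0 < H (x - ((a+b)/2)*y) - H (x - b*y) := sub_pos.2 (Hmono (by
          have := mul_lt_mul_of_pos_right (show (a+b)/2 < b by linarith) hy; linarith))
        have hnum : 0 < H (x - a*y) - H (x - ((a+b)/2)*y) := sub_pos.2 (Hmono (by
          have := mul_lt_mul_of_pos_right (show a < (a+b)/2 by linarith) hy; linarith))
        have hety : ε ((b-a)/2*y) ≤ η y :=
          le_trans (hηge _ hty) (hηmono _ _ hty (by
            have := mul_le_mul_of_nonneg_right (show (b-a)/2 ≤ 1 by linarith) hy.le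
            linarith))
        have he0' : 0 < ε ((b-a)/2*y) := hpos _ hty
        constructor
        · rw [div_le_div_iff₀ (by linarith) hden] at l1
          linarith [mul_le_mul_of_nonneg_left hety hnum.le, l1]
        · rw [div_le_iff₀ hden] at l2
          linarith [mul_le_mul_of_nonneg_left hety hden.le, l2]
      have coreR : |(H (x + k*y) - H x) - k * (H (x + y) - H x)| ≤
          Phi (η y) * (H (x + y) - H x) := by
        have h := core (fun t => H (x + t*y)) hfmono (η y) hηy0 hsymf k hk.le hk1
        simp only [zero_mul, add_zero, one_mul] at h
        convert h using 2 <;> ring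
      have coreL : |(H x - H (x - k*y)) - k * (H x - H (x - y))| ≤
          Phi (η y) * (H x - H (x - y)) := by
        have h := core (fun t => -H (x - t*y)) hgmono (η y) hηy0 hsymg k hk.le hk1
        simp only [zero_mul, sub_zero, one_mul] at h
        have eabs : (H x - H (x - k*y)) - k * (H x - H (x - y))
            = -H (x - k*y) - -H x - k * (-H (x - y) - -H x) := by ring
        have efac : Phi (η y) * (H x - H (x - y)) = Phi (η y) * (-H (x - y) - -H x) := by
          ring
        rw [eabs, efac]
        exact h
      have hPhi0 := Phi_nonneg hηy0
      have habs_sd : |(H (x + y) - H x) - (H x - H (x - y))| ≤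
          η y * (1 + η y) * (H x - H (x - y)) := by
        rw [abs_le]
        constructor
        · linarith [mul_le_mul_of_nonneg_left hsd hηy0, hds,
            mul_le_mul_of_nonneg_left hey hs.le]
        · linarith [mul_nonneg (mul_nonneg hηy0 hηy0) hd.le, hsd]
      show max |(H (x + k * y) - H x) / (H x - H (x - y)) - k|
          |(H (x + k * (-y)) - H x) / (H x - H (x - (-y))) - k|
          ≤ (Phi (η y) + η y) * (1 + η y)^2
      have hksd : ∀ u : ℝ, |k * u| ≤ |u| := by
        intro u
        rw [abs_mul, abs_of_nonneg hk.le]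
        calc k * |u| ≤ 1 * |u| := mul_le_mul_of_nonneg_right hk1 (abs_nonneg _)
          _ = |u| := one_mul _
      apply max_le
      · -- right side
        rw [show (H (x + k*y) - H x) / (H x - H (x - y)) - k
            = ((H (x + k*y) - H x) - k*(H x - H (x - y))) / (H x - H (x - y)) by
          field_simp]
        rw [abs_div, abs_of_pos hd, div_le_iff₀ hd]
        have htri : |(H (x + k*y) - H x) - k*(H x - H (x - y))| ≤
            |(H (x + k*y) - H x) - k*(H (x + y) - H x)| +
            |k * ((H (x + y) - H x) - (H x - H (x - y)))| := by
          have hsplit : (H (x + k*y) - H x) - k*(H x - H (x - y))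
              = ((H (x + k*y) - H x) - k*(H (x + y) - H x))
                + k * ((H (x + y) - H x) - (H x - H (x - y))) := by ring
          rw [hsplit]
          exact abs_add_le _ _
        have h2 : |k * ((H (x + y) - H x) - (H x - H (x - y)))| ≤
            η y * (1 + η y) * (H x - H (x - y)) := le_trans (hksd _) habs_sd
        have hPhiD : Phi (η y) * (H (x + y) - H x) ≤
            Phi (η y) * ((1 + η y) * (H x - H (x - y))) :=
          mul_le_mul_of_nonneg_left hsd hPhi0
        have m1 : 0 ≤ Phi (η y) * (η y * (H x - H (x - y))) :=
          mul_nonneg hPhi0 (mul_nonneg hηy0 hd.le)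
        have m2 : 0 ≤ Phi (η y) * (η y * (η y * (H x - H (x - y)))) :=
          mul_nonneg hPhi0 (mul_nonneg hηy0 (mul_nonneg hηy0 hd.le))
        have m3 : 0 ≤ η y * (η y * (H x - H (x - y))) :=
          mul_nonneg hηy0 (mul_nonneg hηy0 hd.le)
        have m4 : 0 ≤ η y * (η y * (η y * (H x - H (x - y)))) :=
          mul_nonneg hηy0 (mul_nonneg hηy0 (mul_nonneg hηy0 hd.le))
        linarith [htri, coreR, h2, hPhiD, m1, m2, m3, m4]
      · -- left side
        rw [show x + k * (-y) = x - k*y by ring, show x - (-y) = x + y by ring]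
        rw [show H (x - k*y) - H x = -(H x - H (x - k*y)) by ring,
          show H x - H (x + y) = -(H (x + y) - H x) by ring, neg_div_neg_eq]
        rw [show (H x - H (x - k*y)) / (H (x + y) - H x) - k
            = ((H x - H (x - k*y)) - k*(H (x + y) - H x)) / (H (x + y) - H x) by
          field_simp]
        rw [abs_div, abs_of_pos hs, div_le_iff₀ hs]
        have htri : |(H x - H (x - k*y)) - k*(H (x + y) - H x)| ≤
            |(H x - H (x - k*y)) - k*(H x - H (x - y))| +
            |k * ((H x - H (x - y)) - (H (x + y) - H x))| := by
          have hsplit : (H x - H (x - k*y)) - k*(H (x + y) - H x)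
              = ((H x - H (x - k*y)) - k*(H x - H (x - y)))
                + k * ((H x - H (x - y)) - (H (x + y) - H x)) := by ring
          rw [hsplit]
          exact abs_add_le _ _
        have h2 : |k * ((H x - H (x - y)) - (H (x + y) - H x))| ≤
            η y * (1 + η y) * (H x - H (x - y)) := by
          refine le_trans (hksd _) ?_
          rw [abs_sub_comm]
          exact habs_sd
        have h2' : η y * (1 + η y) * (H x - H (x - y)) ≤
            η y * (1 + η y) * ((1 + η y) * (H (x + y) - H x)) :=
          mul_le_mul_of_nonneg_left hds (by positivity)
        have hPhiD : Phi (η y) * (H x - H (x - y)) ≤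
            Phi (η y) * ((1 + η y) * (H (x + y) - H x)) :=
          mul_le_mul_of_nonneg_left hds hPhi0
        have m1 : 0 ≤ Phi (η y) * (η y * (H (x + y) - H x)) :=
          mul_nonneg hPhi0 (mul_nonneg hηy0 hs.le)
        have m2 : 0 ≤ Phi (η y) * (η y * (η y * (H (x + y) - H x))) :=
          mul_nonneg hPhi0 (mul_nonneg hηy0 (mul_nonneg hηy0 hs.le))
        linarith [htri, coreL, h2, h2', hPhiD, m1, m2]
  · -- backward
    rintro ⟨ε', ⟨hpos, ⟨C, hC⟩, htend⟩, hb⟩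
    refine ⟨fun y => 2*M*ε' y, ⟨?_, ?_, ?_⟩, ?_⟩
    · intro y hy
      have := hpos y hy
      show 0 < 2*M*ε' y
      nlinarith
    · refine ⟨2*M*C, fun y hy => ?_⟩
      show 2*M*ε' y ≤ 2*M*C
      nlinarith [hC y hy, hpos y hy]
    · have := htend.const_mul (2*M)
      simpa using this
    · intro x y hy
      have hk := hb x y hy 1 one_pos le_rfl
      have h1 := le_trans (le_max_left _ _) hk
      rw [one_mul] at h1
      set ρ := (H (x + y) - H x) / (H x - H (x - y)) with hρ
      have habs := abs_le.1 h1
      have hqs' := (hqs x y hy).1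
      have hM0 : 0 < M := by linarith
      have hMρ : 1 ≤ M * ρ := by
        rw [div_le_iff₀ hM0] at hqs'
        linarith [hqs']
      have he' := hpos y hy
      have hρ0 : 0 < ρ := by nlinarith
      constructor
      · show 1 / (1 + 2*M*ε' y) ≤ ρ
        rw [div_le_iff₀ (by nlinarith : (0:ℝ) < 1 + 2*M*ε' y)]
        rcases le_or_gt (ε' y) (1/2) with h | h
        · nlinarith [habs.1, mul_nonneg (mul_nonneg (by linarith : (0:ℝ) ≤ 2*(M-1)) he'.le) (by linarith [habs.1] : (0:ℝ) ≤ ρ)]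
        · nlinarith [mul_pos he' hρ0]
      · show ρ ≤ 1 + 2*M*ε' y
        nlinarith [habs.2]
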